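/- Positivity trick for the main-term sums: Let M ≥ 1, t > 0, let b, c, d be positive integers, set c' = c/gcd(c,d), and let f : ℝ → ℂ be any function. Call a Gaussian integer 𝔪 = u + i·b·w (with u, w ∈ ℤ) admissible if gcd(u, bw) = 1, u² + b²w² is odd, M < u² + b²w² ≤ 2M, and gcd(w, c) = 1. Define T = ∑∑ over pairs of admissible (𝔪₁, 𝔪₂) with u₁·w̄₁ ≡ u₂·w̄₂ (mod c) of μ(m₁)·μ(m₂)·f(t·m₁)·conj(f(t·m₂)), where mⱼ = uⱼ² + b²wⱼ² and w̄ⱼ is the multiplicative inverse of wⱼ modulo c, and let T* be the same double sum restricted further to pairs with 𝔪₁·𝔪₂ coprime to c' in ℤ[i]. Then T and T* are real and 0 ≤ T* ≤ T. -/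

import Mathlib

open Finset ArithmeticFunction

/-- `𝔪 = u + i·b·w` is admissible: `gcd(u, bw) = 1`, `u² + b²w²` is odd,
`M < u² + b²w² ≤ 2M`, and `gcd(w, c) = 1`. -/
def admissible (M : ℝ) (b c : ℕ) (u w : ℤ) : Prop :=
  Int.gcd u ((b : ℤ) * w) = 1 ∧ Odd (u ^ 2 + (b : ℤ) ^ 2 * w ^ 2) ∧
    M < ((u ^ 2 + (b : ℤ) ^ 2 * w ^ 2 : ℤ) : ℝ) ∧
    ((u ^ 2 + (b : ℤ) ^ 2 * w ^ 2 : ℤ) : ℝ) ≤ 2 * M ∧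
    Int.gcd w (c : ℤ) = 1

/-- The grid of pairs `(u, w)` used to index the Gaussian integers `u + i·b·w`
of norm at most `2M`. -/
noncomputable def pairGrid (M : ℝ) : Finset (ℤ × ℤ) :=
  Finset.Icc (-(⌈2 * M⌉)) ⌈2 * M⌉ ×ˢ Finset.Icc (-(⌈2 * M⌉)) ⌈2 * M⌉

open Classical in
/-- The generic double sum over pairs of admissible Gaussian integers congruent
modulo `c`, restricted by an extra predicate `P`. -/
noncomputable def Tgen (M t : ℝ) (b c : ℕ) (f : ℝ → ℂ)
    (P : ℤ × ℤ → ℤ × ℤ → Prop) : ℂ :=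
  ∑ p₁ ∈ pairGrid M, ∑ p₂ ∈ pairGrid M,
    if admissible M b c p₁.1 p₁.2 ∧ admissible M b c p₂.1 p₂.2 ∧
        ((p₁.1 : ZMod c) * ((p₁.2 : ZMod c))⁻¹ = (p₂.1 : ZMod c) * ((p₂.2 : ZMod c))⁻¹) ∧
        P p₁ p₂ then
      ((moebius (p₁.1 ^ 2 + (b : ℤ) ^ 2 * p₁.2 ^ 2).toNat : ℤ) : ℂ) *
        ((moebius (p₂.1 ^ 2 + (b : ℤ) ^ 2 * p₂.2 ^ 2).toNat : ℤ) : ℂ) *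
        f (t * ((p₁.1 ^ 2 + (b : ℤ) ^ 2 * p₁.2 ^ 2 : ℤ) : ℝ)) *
        starRingEnd ℂ (f (t * ((p₂.1 ^ 2 + (b : ℤ) ^ 2 * p₂.2 ^ 2 : ℤ) : ℝ)))
    else 0

lemma int_coprime_of_gauss {a b : ℤ} (h : IsCoprime (a : GaussianInt) (b : GaussianInt)) :
    IsCoprime a b := by
  rw [Int.isCoprime_iff_gcd_eq_one]
  by_contra hg
  have hdvd : ((Int.gcd a b : ℤ) : GaussianInt) ∣ a ∧ ((Int.gcd a b : ℤ) : GaussianInt) ∣ b :=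
    ⟨map_dvd (Int.castRingHom GaussianInt) (Int.gcd_dvd_left _ _),
      map_dvd (Int.castRingHom GaussianInt) (Int.gcd_dvd_right _ _)⟩
  have hu : IsUnit ((Int.gcd a b : ℤ) : GaussianInt) := h.isUnit_of_dvd' hdvd.1 hdvd.2
  rw [← Zsqrtd.norm_eq_one_iff] at hu
  rw [Zsqrtd.norm_intCast] at hu
  have : (Int.gcd a b : ℤ).natAbs * (Int.gcd a b : ℤ).natAbs = 1 := by
    rw [← Int.natAbs_mul]; exact hu
  have := Nat.eq_one_of_mul_eq_one_right this
  simp at this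
  exact hg this

lemma gauss_coprime_iff (x : GaussianInt) (n : ℤ) :
    IsCoprime x ((n : ℤ) : GaussianInt) ↔ IsCoprime (Zsqrtd.norm x) n := by
  constructor
  · intro h
    have hs : IsCoprime (star x) ((n : ℤ) : GaussianInt) := by
      have := h.map (starRingEnd GaussianInt)
      simp at this
      exact this
    have := h.mul_left hs
    rw [← Zsqrtd.norm_eq_mul_conj] at this
    exact int_coprime_of_gauss this
  · rintro ⟨u, v, huv⟩
    have : ((u : GaussianInt)) * (Zsqrtd.norm x : GaussianInt) + (v : GaussianInt) * n = 1 := by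
      have := congrArg (fun z : ℤ => (z : GaussianInt)) huv
      push_cast at this
      simpa using this
    rw [Zsqrtd.norm_eq_mul_conj] at this
    exact ⟨u * star x, v, by rw [← this]; ring⟩

lemma isUnit_zmod_of_gcd (c : ℕ) (w : ℤ) (h : Int.gcd w (c:ℤ) = 1) :
    IsUnit ((w : ZMod c)) := by
  obtain ⟨a, b', hab⟩ := Int.isCoprime_iff_gcd_eq_one.mpr h
  have : ((a : ZMod c)) * (w : ZMod c) = 1 := by
    have := congrArg (fun z : ℤ => ((z : ZMod c))) hab
    push_cast at this
    simpa [ZMod.natCast_self] using this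
  exact IsUnit.of_mul_eq_one _ (by rw [mul_comm] at this; exact this)

lemma key_lemma (M : ℝ) (b c n : ℕ) (hn : (n:ℤ) ∣ (c:ℤ)) {p₁ p₂ : ℤ × ℤ}
    (h₁ : admissible M b c p₁.1 p₁.2) (h₂ : admissible M b c p₂.1 p₂.2)
    (hr : (p₁.1 : ZMod c) * ((p₁.2 : ZMod c))⁻¹ = (p₂.1 : ZMod c) * ((p₂.2 : ZMod c))⁻¹)
    (hq : IsCoprime (p₁.1 ^ 2 + (b:ℤ)^2 * p₁.2 ^ 2) (n : ℤ)) :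
    IsCoprime (p₂.1 ^ 2 + (b:ℤ)^2 * p₂.2 ^ 2) (n : ℤ) := by
  obtain ⟨-, -, -, -, hw₁c⟩ := h₁
  obtain ⟨-, -, -, -, hw₂c⟩ := h₂
  rw [Int.isCoprime_iff_gcd_eq_one] at hq ⊢
  by_contra hg
  obtain ⟨q, hqp, hqd⟩ := Nat.exists_prime_and_dvd hg
  haveI : Fact q.Prime := ⟨hqp⟩
  have hqN₂ : (q:ℤ) ∣ (p₂.1 ^ 2 + (b:ℤ)^2 * p₂.2 ^ 2) :=
    dvd_trans (Int.natCast_dvd_natCast.mpr hqd) (Int.gcd_dvd_left _ _)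
  have hqn : (q:ℤ) ∣ (n:ℤ) :=
    dvd_trans (Int.natCast_dvd_natCast.mpr hqd) (Int.gcd_dvd_right _ _)
  have hqc : q ∣ c := by exact_mod_cast hqn.trans hn
  have hwne : ∀ w : ℤ, Int.gcd w (c:ℤ) = 1 → ((w : ZMod q)) ≠ 0 := by
    intro w hw hw0
    have : (q:ℤ) ∣ w := (ZMod.intCast_zmod_eq_zero_iff_dvd _ _).mp hw0
    have : (q:ℤ) ∣ Int.gcd w (c:ℤ) := Int.dvd_coe_gcd this (Int.natCast_dvd_natCast.mpr hqc)
    rw [hw] at this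
    have : q ∣ 1 := by exact_mod_cast this
    exact hqp.one_lt.ne' (Nat.dvd_one.mp this)
  have hy₁ := hwne _ hw₁c
  have hy₂ := hwne _ hw₂c
  let φ : ZMod c →+* ZMod q := ZMod.castHom hqc (ZMod q)
  have hinv : ∀ w : ℤ, Int.gcd w (c:ℤ) = 1 → φ (((w : ZMod c))⁻¹) = ((w : ZMod q))⁻¹ := by
    intro w hw
    have h1 : (w : ZMod c) * ((w : ZMod c))⁻¹ = 1 :=
      ZMod.mul_inv_of_unit _ (isUnit_zmod_of_gcd c w hw)
    have h2 := congrArg φ h1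
    rw [map_mul, map_one, map_intCast] at h2
    exact eq_inv_of_mul_eq_one_left (by rw [mul_comm] at h2; exact h2)
  have hrq : (p₁.1 : ZMod q) * ((p₁.2 : ZMod q))⁻¹ = (p₂.1 : ZMod q) * ((p₂.2 : ZMod q))⁻¹ := by
    have := congrArg φ hr
    rw [map_mul, map_mul, map_intCast, map_intCast, hinv _ hw₁c, hinv _ hw₂c] at this
    exact this
  have hN₂0 : (p₂.1 : ZMod q)^2 + (b:ZMod q)^2 * (p₂.2 : ZMod q)^2 = 0 := by
    have := (ZMod.intCast_zmod_eq_zero_iff_dvd _ q).mpr hqN₂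
    push_cast at this
    exact this
  have e₂ : ((p₂.1 : ZMod q) * ((p₂.2 : ZMod q))⁻¹)^2 + (b:ZMod q)^2 = 0 := by
    have : ((p₂.1 : ZMod q) * ((p₂.2 : ZMod q))⁻¹)^2 + (b:ZMod q)^2
        = ((p₂.1 : ZMod q)^2 + (b:ZMod q)^2 * (p₂.2 : ZMod q)^2) * (((p₂.2 : ZMod q))⁻¹)^2 := by
      field_simp
    rw [this, hN₂0, zero_mul]
  have hN₁0 : (p₁.1 : ZMod q)^2 + (b:ZMod q)^2 * (p₁.2 : ZMod q)^2 = 0 := by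
    have : (p₁.1 : ZMod q)^2 + (b:ZMod q)^2 * (p₁.2 : ZMod q)^2
        = (((p₁.1 : ZMod q) * ((p₁.2 : ZMod q))⁻¹)^2 + (b:ZMod q)^2) * (p₁.2 : ZMod q)^2 := by
      field_simp
    rw [this, hrq, e₂, zero_mul]
  have hqN₁ : (q:ℤ) ∣ (p₁.1 ^ 2 + (b:ℤ)^2 * p₁.2 ^ 2) := by
    rw [← ZMod.intCast_zmod_eq_zero_iff_dvd]
    push_cast
    exact hN₁0
  have : (q:ℤ) ∣ ((p₁.1 ^ 2 + (b:ℤ)^2 * p₁.2 ^ 2).gcd (n:ℤ) : ℤ) := Int.dvd_coe_gcd hqN₁ hqn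
  rw [hq] at this
  have : q ∣ 1 := by exact_mod_cast this
  exact hqp.one_lt.ne' (Nat.dvd_one.mp this)

open Classical in
lemma sum_ite_pair {c : ℕ} [NeZero c] (a₁ a₂ : ZMod c) (h₁ h₂ : Prop) (v₁ v₂ : ℂ) :
    ∑ z : ZMod c, (if h₁ ∧ a₁ = z then v₁ else 0) * (if h₂ ∧ a₂ = z then v₂ else 0)
      = if h₁ ∧ h₂ ∧ a₁ = a₂ then v₁ * v₂ else 0 := by
  by_cases H₁ : h₁ <;> by_cases H₂ : h₂ <;>
    simp [H₁, H₂, ite_mul, mul_ite, Finset.sum_ite_eq, eq_comm]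

open Classical in
lemma double_sum_eq (M : ℝ) (c : ℕ) [NeZero c] (B : ℤ × ℤ → Prop)
    (r : ℤ × ℤ → ZMod c) (g : ℤ × ℤ → ℂ) :
    ∑ p₁ ∈ pairGrid M, ∑ p₂ ∈ pairGrid M,
      (if B p₁ ∧ B p₂ ∧ r p₁ = r p₂ then g p₁ * (starRingEnd ℂ) (g p₂) else 0)
    = ∑ z : ZMod c,
        (∑ p ∈ pairGrid M, if B p ∧ r p = z then g p else 0) *
          (starRingEnd ℂ) (∑ p ∈ pairGrid M, if B p ∧ r p = z then g p else 0) := by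
  have step : ∀ z : ZMod c,
      (∑ p ∈ pairGrid M, if B p ∧ r p = z then g p else 0) *
        (starRingEnd ℂ) (∑ p ∈ pairGrid M, if B p ∧ r p = z then g p else 0)
      = ∑ p₁ ∈ pairGrid M, ∑ p₂ ∈ pairGrid M,
          (if B p₁ ∧ r p₁ = z then g p₁ else 0) *
            (if B p₂ ∧ r p₂ = z then (starRingEnd ℂ) (g p₂) else 0) := by
    intro z
    rw [map_sum, Finset.sum_mul_sum]
    congr 1; ext p₁; congr 1; ext p₂
    congr 1
    rw [apply_ite (starRingEnd ℂ), _root_.map_zero]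
  symm
  calc (∑ z : ZMod c, (∑ p ∈ pairGrid M, if B p ∧ r p = z then g p else 0) *
          (starRingEnd ℂ) (∑ p ∈ pairGrid M, if B p ∧ r p = z then g p else 0))
      = ∑ z : ZMod c, ∑ p₁ ∈ pairGrid M, ∑ p₂ ∈ pairGrid M,
          (if B p₁ ∧ r p₁ = z then g p₁ else 0) *
            (if B p₂ ∧ r p₂ = z then (starRingEnd ℂ) (g p₂) else 0) :=
        Finset.sum_congr rfl fun z _ => step z
    _ = ∑ p₁ ∈ pairGrid M, ∑ z : ZMod c, ∑ p₂ ∈ pairGrid M,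
          (if B p₁ ∧ r p₁ = z then g p₁ else 0) *
            (if B p₂ ∧ r p₂ = z then (starRingEnd ℂ) (g p₂) else 0) := Finset.sum_comm
    _ = ∑ p₁ ∈ pairGrid M, ∑ p₂ ∈ pairGrid M, ∑ z : ZMod c,
          (if B p₁ ∧ r p₁ = z then g p₁ else 0) *
            (if B p₂ ∧ r p₂ = z then (starRingEnd ℂ) (g p₂) else 0) :=
        Finset.sum_congr rfl fun p₁ _ => Finset.sum_comm
    _ = ∑ p₁ ∈ pairGrid M, ∑ p₂ ∈ pairGrid M,
          (if B p₁ ∧ B p₂ ∧ r p₁ = r p₂ then g p₁ * (starRingEnd ℂ) (g p₂) else 0) :=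
        Finset.sum_congr rfl fun p₁ _ => Finset.sum_congr rfl fun p₂ _ =>
          sum_ite_pair (r p₁) (r p₂) (B p₁) (B p₂) (g p₁) ((starRingEnd ℂ) (g p₂))

theorem positivity_trick (M t : ℝ) (hM : 1 ≤ M) (ht : 0 < t) (b c d : ℕ)
    (hb : 0 < b) (hc : 0 < c) (hd : 0 < d) (f : ℝ → ℂ) :
    (Tgen M t b c f (fun _ _ => True)).im = 0 ∧
    (Tgen M t b c f (fun p₁ p₂ =>
        IsCoprime ((⟨p₁.1, (b : ℤ) * p₁.2⟩ : GaussianInt) *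
            (⟨p₂.1, (b : ℤ) * p₂.2⟩ : GaussianInt))
          ((c / Nat.gcd c d : ℕ) : GaussianInt))).im = 0 ∧
    0 ≤ (Tgen M t b c f (fun p₁ p₂ =>
        IsCoprime ((⟨p₁.1, (b : ℤ) * p₁.2⟩ : GaussianInt) *
            (⟨p₂.1, (b : ℤ) * p₂.2⟩ : GaussianInt))
          ((c / Nat.gcd c d : ℕ) : GaussianInt))).re ∧
    (Tgen M t b c f (fun p₁ p₂ =>
        IsCoprime ((⟨p₁.1, (b : ℤ) * p₁.2⟩ : GaussianInt) *
            (⟨p₂.1, (b : ℤ) * p₂.2⟩ : GaussianInt))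
          ((c / Nat.gcd c d : ℕ) : GaussianInt))).re ≤
      (Tgen M t b c f (fun _ _ => True)).re := by
  classical
  haveI : NeZero c := ⟨hc.ne'⟩
  set n : ℕ := c / Nat.gcd c d with hn_def
  have hn : (n:ℤ) ∣ (c:ℤ) := by
    exact_mod_cast Nat.div_dvd_of_dvd (Nat.gcd_dvd_left c d)
  -- notation
  set r : ℤ × ℤ → ZMod c := fun p => (p.1 : ZMod c) * ((p.2 : ZMod c))⁻¹ with hr_def
  set Np : ℤ × ℤ → ℤ := fun p => p.1 ^ 2 + (b:ℤ)^2 * p.2 ^ 2 with hNp_def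
  set g : ℤ × ℤ → ℂ := fun p => ((moebius (Np p).toNat : ℤ) : ℂ) * f (t * ((Np p : ℤ) : ℝ))
    with hg_def
  set A : ℤ × ℤ → Prop := fun p => admissible M b c p.1 p.2 with hA_def
  set Q : ℤ × ℤ → Prop := fun p => IsCoprime (Np p) (n : ℤ) with hQ_def
  obtain ⟨B2, hB2⟩ : ∃ B2 : ℤ × ℤ → Prop, ∀ p, B2 p ↔ A p ∧ Q p :=
    ⟨fun p => A p ∧ Q p, fun _ => Iff.rfl⟩
  have hQiff : ∀ p : ℤ × ℤ,
      IsCoprime (⟨p.1, (b : ℤ) * p.2⟩ : GaussianInt) ((n : ℕ) : GaussianInt) ↔ Q p := by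
    intro p
    have hcast : ((n : ℕ) : GaussianInt) = (((n:ℤ) : ℤ) : GaussianInt) := by push_cast; rfl
    rw [hcast, gauss_coprime_iff]
    have hnorm : Zsqrtd.norm (⟨p.1, (b : ℤ) * p.2⟩ : GaussianInt) = Np p := by
      simp [Zsqrtd.norm, hNp_def]; ring
    rw [hnorm]
  have hval : ∀ p₁ p₂ : ℤ × ℤ,
      ((moebius (Np p₁).toNat : ℤ) : ℂ) * ((moebius (Np p₂).toNat : ℤ) : ℂ) *
        f (t * ((Np p₁ : ℤ) : ℝ)) * starRingEnd ℂ (f (t * ((Np p₂ : ℤ) : ℝ)))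
      = g p₁ * starRingEnd ℂ (g p₂) := by
    intro p₁ p₂
    simp only [hg_def, map_mul, map_intCast]
    ring
  -- rewrite both Tgen's
  have e1 : Tgen M t b c f (fun _ _ => True)
      = ∑ z : ZMod c,
        (∑ p ∈ pairGrid M, if A p ∧ r p = z then g p else 0) *
          (starRingEnd ℂ) (∑ p ∈ pairGrid M, if A p ∧ r p = z then g p else 0) := by
    rw [← double_sum_eq M c A r g, Tgen]
    refine Finset.sum_congr rfl fun p₁ _ => Finset.sum_congr rfl fun p₂ _ => ?_
    have hcond : (admissible M b c p₁.1 p₁.2 ∧ admissible M b c p₂.1 p₂.2 ∧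
        ((p₁.1 : ZMod c) * ((p₁.2 : ZMod c))⁻¹ = (p₂.1 : ZMod c) * ((p₂.2 : ZMod c))⁻¹) ∧ True)
        ↔ (A p₁ ∧ A p₂ ∧ r p₁ = r p₂) := by
      simp only [hA_def, hr_def, and_true]
    split_ifs with h1 h2
    · exact hval p₁ p₂
    · exact absurd (hcond.mp h1) h2
    · exact absurd (hcond.mpr (by assumption)) h1
    · rfl
  have e2 : Tgen M t b c f (fun p₁ p₂ =>
        IsCoprime ((⟨p₁.1, (b : ℤ) * p₁.2⟩ : GaussianInt) *
            (⟨p₂.1, (b : ℤ) * p₂.2⟩ : GaussianInt))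
          ((c / Nat.gcd c d : ℕ) : GaussianInt))
      = ∑ z : ZMod c,
        (∑ p ∈ pairGrid M, if B2 p ∧ r p = z then g p else 0) *
          (starRingEnd ℂ) (∑ p ∈ pairGrid M, if B2 p ∧ r p = z then g p else 0) := by
    rw [← double_sum_eq M c B2 r g, Tgen]
    refine Finset.sum_congr rfl fun p₁ _ => Finset.sum_congr rfl fun p₂ _ => ?_
    have hcop : IsCoprime ((⟨p₁.1, (b : ℤ) * p₁.2⟩ : GaussianInt) *
            (⟨p₂.1, (b : ℤ) * p₂.2⟩ : GaussianInt))
          ((c / Nat.gcd c d : ℕ) : GaussianInt) ↔ Q p₁ ∧ Q p₂ := by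
      rw [show (((c / Nat.gcd c d : ℕ)) : GaussianInt) = ((n : ℕ) : GaussianInt) from rfl,
        IsCoprime.mul_left_iff]
      exact and_congr (hQiff p₁) (hQiff p₂)
    have hcond : (admissible M b c p₁.1 p₁.2 ∧ admissible M b c p₂.1 p₂.2 ∧
        ((p₁.1 : ZMod c) * ((p₁.2 : ZMod c))⁻¹ = (p₂.1 : ZMod c) * ((p₂.2 : ZMod c))⁻¹) ∧
        IsCoprime ((⟨p₁.1, (b : ℤ) * p₁.2⟩ : GaussianInt) *
            (⟨p₂.1, (b : ℤ) * p₂.2⟩ : GaussianInt))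
          ((c / Nat.gcd c d : ℕ) : GaussianInt))
        ↔ (B2 p₁ ∧ B2 p₂ ∧ r p₁ = r p₂) := by
      rw [hcop, hB2 p₁, hB2 p₂]
      simp only [hA_def, hr_def]
      tauto
    split_ifs with h1 h2
    · exact hval p₁ p₂
    · exact absurd (hcond.mp h1) h2
    · exact absurd (hcond.mpr (by assumption)) h1
    · rfl
  -- basic facts about sums of the form ∑ h z * conj (h z)
  have him : ∀ h : ZMod c → ℂ, (∑ z : ZMod c, h z * (starRingEnd ℂ) (h z)).im = 0 := by
    intro h
    rw [Complex.im_sum]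
    simp [Complex.mul_conj]
  have hre : ∀ h : ZMod c → ℂ,
      (∑ z : ZMod c, h z * (starRingEnd ℂ) (h z)).re = ∑ z : ZMod c, Complex.normSq (h z) := by
    intro h
    rw [Complex.re_sum]
    simp [Complex.mul_conj]
  refine ⟨by rw [e1]; exact him _, by rw [e2]; exact him _, ?_, ?_⟩
  · rw [e2, hre]
    exact Finset.sum_nonneg fun z _ => Complex.normSq_nonneg _
  · rw [e1, e2, hre, hre]
    refine Finset.sum_le_sum fun z _ => ?_
    by_cases hex : ∃ p : ℤ × ℤ, B2 p ∧ r p = z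
    · have heq : (∑ p ∈ pairGrid M, if B2 p ∧ r p = z then g p else 0)
          = ∑ p ∈ pairGrid M, if A p ∧ r p = z then g p else 0 := by
        refine Finset.sum_congr rfl fun p _ => ?_
        have hcond : (B2 p ∧ r p = z) ↔ (A p ∧ r p = z) := by
          rw [hB2 p]
          constructor
          · rintro ⟨⟨hA, _⟩, hrz⟩; exact ⟨hA, hrz⟩
          · rintro ⟨hA, hrz⟩
            obtain ⟨p₀, hB₀, hr₀⟩ := hex
            obtain ⟨hA₀, hQ₀⟩ := (hB2 p₀).mp hB₀
            exact ⟨⟨hA, key_lemma M b c n hn hA₀ hA (hr₀.trans hrz.symm) hQ₀⟩, hrz⟩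
        split_ifs with h1 h2
        · rfl
        · exact absurd (hcond.mp h1) h2
        · exact absurd (hcond.mpr (by assumption)) h1
        · rfl
      rw [heq]
    · have heq : (∑ p ∈ pairGrid M, if B2 p ∧ r p = z then g p else 0) = 0 :=
        Finset.sum_eq_zero fun p _ => if_neg (fun hh => hex ⟨p, hh.1, hh.2⟩)
      rw [heq]
      simpa using Complex.normSq_nonneg _
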